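/- (Theorem 2(a): solution set of the semiparametric estimating equations.) Let f(x) = det(V0)^{−1/2} ψ(d(x,μ0,V0)) be an elliptical density on ℝ^p, let w : [0,∞) → [0,∞) be measurable, and let a > 0 be such that ∫ w(d(x,μ0,aV0)) (1 + ‖x−μ0‖²) f(x) dx < ∞. Then the pair (μ, V) = (μ0, aV0) solves the system of estimating equations: ∫ w(d(x,μ,V)) (x−μ) f(x) dx = 0 and p·∫ w(d(x,μ,V)) (x−μ)(x−μ)ᵀ f(x) dx = ( ∫ w(d(x,μ,V)) d(x,μ,V) f(x) dx ) · V. -/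

import Mathlib

open MeasureTheory Matrix Finset

/-- Mahalanobis-type squared distance `d(x, μ, V) = (x−μ)ᵀ V⁻¹ (x−μ)`. -/
noncomputable def mahal {p : ℕ} (x μ : EuclideanSpace ℝ (Fin p))
    (V : Matrix (Fin p) (Fin p) ℝ) : ℝ :=
  ∑ i, ∑ j, (x i - μ i) * V⁻¹ i j * (x j - μ j)

section Helpers

variable {p : ℕ}

/-! ### Sign flip symmetry on `Fin p → ℝ` -/

def negAtFun (k : Fin p) (y : Fin p → ℝ) : Fin p → ℝ := fun i => if i = k then -y i else y i

lemma measurable_negAtFun (k : Fin p) : Measurable (negAtFun k) :=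
  measurable_pi_lambda _ fun i => by
    unfold negAtFun
    by_cases h : i = k
    · simp only [h, if_pos rfl]; exact (measurable_pi_apply _).neg
    · simp only [if_neg h]; exact measurable_pi_apply _

def negAt (k : Fin p) : (Fin p → ℝ) ≃ᵐ (Fin p → ℝ) where
  toFun := negAtFun k
  invFun := negAtFun k
  left_inv y := by ext i; by_cases h : i = k <;> simp [negAtFun, h]
  right_inv y := by ext i; by_cases h : i = k <;> simp [negAtFun, h]
  measurable_toFun := measurable_negAtFun k
  measurable_invFun := measurable_negAtFun k

lemma negAt_measurePreserving (k : Fin p) :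
    MeasurePreserving (negAt k) (volume : Measure (Fin p → ℝ)) volume := by
  classical
  have hdiag : ⇑(negAt k)
      = Matrix.toLin' (Matrix.diagonal (fun i => if i = k then (-1:ℝ) else 1)) := by
    funext y
    ext i
    rw [Matrix.toLin'_apply, Matrix.mulVec_diagonal]
    by_cases h : i = k <;> simp [negAt, negAtFun, h]
  have hdet : (Matrix.diagonal (fun i => if i = k then (-1:ℝ) else 1)).det = -1 := by
    simp [Matrix.det_diagonal, Finset.prod_ite_eq']
  constructor
  · exact (negAt k).measurable
  · rw [hdiag, Real.map_matrix_volume_pi_eq_smul_volume_pi (by rw [hdet]; norm_num), hdet]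
    norm_num

lemma integral_offdiag (G : ℝ → ℝ) {k l : Fin p} (hkl : k ≠ l) :
    ∫ y : Fin p → ℝ, G (∑ i, y i * y i) * (y k * y l) = 0 := by
  have h := (negAt_measurePreserving k).integral_comp'
    (g := fun y : Fin p → ℝ => G (∑ i, y i * y i) * (y k * y l))
  have heq : ∀ y : Fin p → ℝ,
      G (∑ i, negAt k y i * negAt k y i) * (negAt k y k * negAt k y l)
        = -(G (∑ i, y i * y i) * (y k * y l)) := by
    intro y
    have hsum : ∑ i, negAt k y i * negAt k y i = ∑ i, y i * y i :=
      Finset.sum_congr rfl fun i _ => by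
        by_cases h : i = k <;> simp [negAt, negAtFun, h]
    rw [hsum]
    have h1 : negAt k y k = -y k := by simp [negAt, negAtFun]
    have h2 : negAt k y l = y l := by simp [negAt, negAtFun, hkl.symm]
    rw [h1, h2]; ring
  simp only [heq] at h
  rw [integral_neg] at h
  linarith

lemma integral_diag_swap (G : ℝ → ℝ) (k l : Fin p) :
    ∫ y : Fin p → ℝ, G (∑ i, y i * y i) * (y k * y k)
      = ∫ y : Fin p → ℝ, G (∑ i, y i * y i) * (y l * y l) := by
  have h := (volume_measurePreserving_piCongrLeft (fun _ : Fin p => ℝ)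
      (Equiv.swap k l)).integral_comp'
    (g := fun y : Fin p → ℝ => G (∑ i, y i * y i) * (y k * y k))
  have happ : ∀ (y : Fin p → ℝ) (j : Fin p),
      (MeasurableEquiv.piCongrLeft (fun _ : Fin p => ℝ) (Equiv.swap k l)) y j
        = y (Equiv.swap k l j) := by
    intro y j
    have := Equiv.piCongrLeft_apply_apply (fun _ : Fin p => ℝ) (Equiv.swap k l) y
      (Equiv.swap k l j)
    simpa [MeasurableEquiv.coe_piCongrLeft, Equiv.swap_apply_self] using this
  have heq : ∀ y : Fin p → ℝ,
      (fun y : Fin p → ℝ => G (∑ i, y i * y i) * (y k * y k))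
        ((MeasurableEquiv.piCongrLeft (fun _ : Fin p => ℝ) (Equiv.swap k l)) y)
      = G (∑ i, y i * y i) * (y l * y l) := by
    intro y
    simp only [happ]
    rw [Equiv.swap_apply_left]
    congr 1
    rw [← Equiv.sum_comp (Equiv.swap k l) (fun i => y i * y i)]
  simp only [heq] at h
  exact h.symm

/-! ### Quadratic form computations -/

lemma quad_eq_dot (B : Matrix (Fin p) (Fin p) ℝ) (v : Fin p → ℝ) :
    ∑ i, ∑ j, v i * B i j * v j = v ⬝ᵥ B.mulVec v := by
  simp [dotProduct, Matrix.mulVec, Finset.mul_sum, mul_assoc]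

lemma dot_mulVec_comp (L B : Matrix (Fin p) (Fin p) ℝ) (y : Fin p → ℝ) :
    (L.mulVec y) ⬝ᵥ B.mulVec (L.mulVec y) = y ⬝ᵥ ((Lᵀ * B * L).mulVec y) := by
  rw [Matrix.mulVec_mulVec, Matrix.dotProduct_mulVec, Matrix.dotProduct_mulVec,
    ← Matrix.vecMul_transpose, Matrix.vecMul_vecMul, Matrix.mul_assoc]

/-! ### Affine change of variables on `Fin p → ℝ` -/

lemma map_affine (L : Matrix (Fin p) (Fin p) ℝ) (hdet : L.det ≠ 0) (μ0' : Fin p → ℝ) :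
    Measure.map (fun y : Fin p → ℝ => μ0' + L.mulVec y) volume
      = ENNReal.ofReal |L.det|⁻¹ • volume := by
  have hmeasL : Measurable (Matrix.toLin' L) :=
    (LinearMap.continuous_on_pi _).measurable
  have h1 : (fun y : Fin p → ℝ => μ0' + L.mulVec y)
      = (fun z : Fin p → ℝ => μ0' + z) ∘ (Matrix.toLin' L) := by
    funext y; simp [Matrix.toLin'_apply]
  rw [h1, ← Measure.map_map (measurable_const_add μ0') hmeasL,
    Real.map_matrix_volume_pi_eq_smul_volume_pi hdet,
    Measure.map_smul, map_add_left_eq_self, abs_inv]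

lemma measurable_affine (L : Matrix (Fin p) (Fin p) ℝ) (μ0' : Fin p → ℝ) :
    Measurable (fun y : Fin p → ℝ => μ0' + L.mulVec y) := by
  have hmeasL : Measurable (Matrix.toLin' L) :=
    (LinearMap.continuous_on_pi _).measurable
  have h1 : (fun y : Fin p → ℝ => μ0' + L.mulVec y)
      = (fun z : Fin p → ℝ => μ0' + z) ∘ (Matrix.toLin' L) := by
    funext y; simp [Matrix.toLin'_apply]
  rw [h1]; exact (measurable_const_add μ0').comp hmeasL

lemma integral_affine (L : Matrix (Fin p) (Fin p) ℝ) (hdet : L.det ≠ 0) (μ0' : Fin p → ℝ)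
    (F : (Fin p → ℝ) → ℝ) (hF : AEStronglyMeasurable F volume) :
    ∫ z, F z = |L.det| * ∫ y, F (μ0' + L.mulVec y) := by
  have hA := measurable_affine L μ0'
  have h2 : ∫ y, F (μ0' + L.mulVec y)
      = ∫ z, F z ∂(Measure.map (fun y : Fin p → ℝ => μ0' + L.mulVec y) volume) := by
    rw [integral_map hA.aemeasurable]
    rw [map_affine L hdet μ0']
    exact hF.smul_measure _
  rw [h2, map_affine L hdet μ0', integral_smul_measure,
    ENNReal.toReal_ofReal (by positivity), smul_eq_mul, ← mul_assoc,
    mul_inv_cancel₀ (by simpa using hdet), one_mul]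

lemma integrable_affine (L : Matrix (Fin p) (Fin p) ℝ) (hdet : L.det ≠ 0) (μ0' : Fin p → ℝ)
    (F : (Fin p → ℝ) → ℝ) (hF : AEStronglyMeasurable F volume) (hFi : Integrable F volume) :
    Integrable (fun y => F (μ0' + L.mulVec y)) volume := by
  have hA := measurable_affine L μ0'
  have h1 : Integrable F (Measure.map (fun y : Fin p → ℝ => μ0' + L.mulVec y) volume) := by
    rw [map_affine L hdet μ0']
    refine (integrable_smul_measure ?_ ?_).mpr hFi
    · simp [hdet, abs_eq_zero]
    · exact ENNReal.ofReal_ne_top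
  exact (integrable_map_measure (by rw [map_affine L hdet μ0']; exact hF.smul_measure _)
    hA.aemeasurable).mp h1

/-! ### Reflection on EuclideanSpace -/

noncomputable def reflAt (c : EuclideanSpace ℝ (Fin p)) :
    EuclideanSpace ℝ (Fin p) ≃ᵐ EuclideanSpace ℝ (Fin p) where
  toFun x := c - x
  invFun x := c - x
  left_inv x := by simp
  right_inv x := by simp
  measurable_toFun := measurable_const.sub measurable_id
  measurable_invFun := measurable_const.sub measurable_id

lemma reflAt_measurePreserving (c : EuclideanSpace ℝ (Fin p)) :
    MeasurePreserving (reflAt c) (volume : Measure (EuclideanSpace ℝ (Fin p))) volume :=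
  MeasureTheory.Measure.measurePreserving_sub_left volume c

end Helpers

theorem elliptical_solves_estimating_equations
    {p : ℕ} (hp : 1 ≤ p)
    (μ0 : EuclideanSpace ℝ (Fin p)) (V0 : Matrix (Fin p) (Fin p) ℝ)
    (hV0sym : V0.IsSymm) (hV0 : V0.PosDef)
    (ψ : ℝ → ℝ) (hψmeas : Measurable ψ) (hψpos : ∀ u, 0 ≤ u → 0 < ψ u)
    (f : EuclideanSpace ℝ (Fin p) → ℝ)
    (hf : ∀ x, f x = (Real.sqrt V0.det)⁻¹ * ψ (mahal x μ0 V0))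
    (hf1 : ∫ x, f x = 1)
    (w : ℝ → ℝ) (hwmeas : Measurable w) (hw0 : ∀ u, 0 ≤ u → 0 ≤ w u)
    (a : ℝ) (ha : 0 < a)
    (hint : Integrable
      (fun x => w (mahal x μ0 (a • V0)) * (1 + ‖x - μ0‖ ^ 2) * f x)) :
    (∫ x, (w (mahal x μ0 (a • V0)) * f x) • (x - μ0) = 0) ∧
    (∀ i j : Fin p,
      (p : ℝ) * ∫ x, w (mahal x μ0 (a • V0)) * ((x i - μ0 i) * (x j - μ0 j)) * f x
        = (∫ x, w (mahal x μ0 (a • V0)) * mahal x μ0 (a • V0) * f x) * (a • V0) i j) := by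
  classical
  -- reflection invariance of mahal and f
  have hmrefl : ∀ (V : Matrix (Fin p) (Fin p) ℝ) (x : EuclideanSpace ℝ (Fin p)),
      mahal (reflAt (μ0 + μ0) x) μ0 V = mahal x μ0 V := by
    intro V x
    unfold mahal
    refine Finset.sum_congr rfl fun i _ => Finset.sum_congr rfl fun j _ => ?_
    have hi : (reflAt (μ0 + μ0) x) i - μ0 i = -(x i - μ0 i) := by
      show (μ0 i + μ0 i) - x i - μ0 i = -(x i - μ0 i)
      ring
    have hj : (reflAt (μ0 + μ0) x) j - μ0 j = -(x j - μ0 j) := by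
      show (μ0 j + μ0 j) - x j - μ0 j = -(x j - μ0 j)
      ring
    rw [hi, hj]; ring
  constructor
  · -- first estimating equation, by reflection symmetry
    set F : EuclideanSpace ℝ (Fin p) → EuclideanSpace ℝ (Fin p) :=
      fun x => (w (mahal x μ0 (a • V0)) * f x) • (x - μ0) with hF
    have hcomp : ∀ x, F (reflAt (μ0 + μ0) x) = -F x := by
      intro x
      have hfS : f (reflAt (μ0 + μ0) x) = f x := by rw [hf, hf, hmrefl]
      have hvec : reflAt (μ0 + μ0) x - μ0 = -(x - μ0) := by
        ext i
        show ((μ0 i + μ0 i) - x i) - μ0 i = -(x i - μ0 i)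
        ring
      rw [hF]
      simp only [hmrefl, hfS, hvec, smul_neg]
    have h := (reflAt_measurePreserving (μ0 + μ0)).integral_comp' (g := F)
    simp only [hcomp, integral_neg] at h
    have h2 : (2 : ℝ) • ∫ x, F x = 0 := by
      rw [two_smul]
      nth_rewrite 1 [← h]
      simp
    rcases smul_eq_zero.mp h2 with h3 | h3
    · norm_num at h3
    · exact h3
  · -- second estimating equation, via whitening change of variables
    intro i j
    set e := (MeasurableEquiv.toLp 2 (Fin p → ℝ)).symm with he
    have mpE := EuclideanSpace.volume_preserving_symm_measurableEquiv_toLp (Fin p)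
    have mpS : MeasurePreserving (⇑e.symm) volume volume := MeasurePreserving.symm e mpE
    -- the square root of V0
    set L : Matrix (Fin p) (Fin p) ℝ := (open MatrixOrder in CFC.sqrt V0) with hLdef
    have hLps : L.PosSemidef := open MatrixOrder in (CFC.sqrt_nonneg V0).posSemidef
    have hLL : L * L = V0 := open MatrixOrder in CFC.sqrt_mul_sqrt_self V0 hV0.posSemidef.nonneg
    have hLsym : Lᵀ = L := hLps.1
    have hdetV0 : (0:ℝ) < V0.det := hV0.det_pos
    have hdetLnn : (0:ℝ) ≤ L.det := by
      rw [hLps.1.det_eq_prod_eigenvalues]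
      exact Finset.prod_nonneg fun k _ => by
        simpa using hLps.eigenvalues_nonneg k
    have hdetsq : L.det * L.det = V0.det := by rw [← Matrix.det_mul, hLL]
    have hdL : L.det = Real.sqrt V0.det := by
      rw [← hdetsq, Real.sqrt_mul_self hdetLnn]
    have hdetLpos : (0:ℝ) < L.det := by
      rw [hdL]; exact Real.sqrt_pos.mpr hdetV0
    have hdet0 : L.det ≠ 0 := hdetLpos.ne'
    have hu : IsUnit L.det := isUnit_iff_ne_zero.mpr hdet0
    have hLVL : L * V0⁻¹ * L = 1 := by
      have hinv : V0⁻¹ = L⁻¹ * L⁻¹ := by rw [← hLL, Matrix.mul_inv_rev]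
      rw [hinv]
      have hassoc : L * (L⁻¹ * L⁻¹) * L = (L * L⁻¹) * (L⁻¹ * L) := by
        simp only [Matrix.mul_assoc]
      rw [hassoc, Matrix.mul_nonsing_inv _ hu, Matrix.nonsing_inv_mul _ hu, Matrix.one_mul]
    -- inverse of a • V0
    have haunit : IsUnit (V0.det) := isUnit_iff_ne_zero.mpr hdetV0.ne'
    have hBinv : (a • V0)⁻¹ = a⁻¹ • V0⁻¹ := by
      have : Invertible a := invertibleOfNonzero ha.ne'
      rw [Matrix.inv_smul (A := V0) a haunit, invOf_eq_inv]
    have hLVL' : Lᵀ * (a • V0)⁻¹ * L = a⁻¹ • (1 : Matrix (Fin p) (Fin p) ℝ) := by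
      rw [hLsym, hBinv, Matrix.mul_smul, Matrix.smul_mul, hLVL]
    have hLVL1 : Lᵀ * V0⁻¹ * L = (1 : Matrix (Fin p) (Fin p) ℝ) := by rw [hLsym, hLVL]
    -- the affine map in pi space
    set μ0' : Fin p → ℝ := fun k => μ0 k with hμ0'
    set Q : (Fin p → ℝ) → ℝ := fun y => ∑ k, y k * y k with hQ
    have hQnn : ∀ y, 0 ≤ Q y := fun y =>
      Finset.sum_nonneg fun k _ => mul_self_nonneg _
    have hQmeas : Measurable Q :=
      Finset.measurable_sum _ fun k _ => (measurable_pi_apply k).mul (measurable_pi_apply k)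
    -- coordinates of the transported point
    have hAcoord : ∀ (y : Fin p → ℝ) (k : Fin p),
        (e.symm (μ0' + L.mulVec y)) k - μ0 k = L.mulVec y k := by
      intro y k
      show (μ0 k + L.mulVec y k) - μ0 k = L.mulVec y k
      ring
    -- mahalanobis distances of transported points
    have hmahalA : ∀ (V : Matrix (Fin p) (Fin p) ℝ) (y : Fin p → ℝ),
        mahal (e.symm (μ0' + L.mulVec y)) μ0 V = y ⬝ᵥ ((Lᵀ * V⁻¹ * L).mulVec y) := by
      intro V y
      unfold mahal
      calc ∑ k, ∑ l, ((e.symm (μ0' + L.mulVec y)) k - μ0 k) * V⁻¹ k l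
              * ((e.symm (μ0' + L.mulVec y)) l - μ0 l)
          = ∑ k, ∑ l, (L.mulVec y) k * V⁻¹ k l * (L.mulVec y) l := by
            refine Finset.sum_congr rfl fun k _ => Finset.sum_congr rfl fun l _ => by
              rw [hAcoord, hAcoord]
        _ = (L.mulVec y) ⬝ᵥ V⁻¹.mulVec (L.mulVec y) := quad_eq_dot _ _
        _ = y ⬝ᵥ ((Lᵀ * V⁻¹ * L).mulVec y) := dot_mulVec_comp _ _ _
    have hmahalA1 : ∀ y : Fin p → ℝ,
        mahal (e.symm (μ0' + L.mulVec y)) μ0 (a • V0) = a⁻¹ * Q y := by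
      intro y
      rw [hmahalA, hLVL', Matrix.smul_mulVec, Matrix.one_mulVec]
      simp [hQ, dotProduct, Finset.mul_sum, mul_left_comm]
    have hmahalA0 : ∀ y : Fin p → ℝ,
        mahal (e.symm (μ0' + L.mulVec y)) μ0 V0 = Q y := by
      intro y
      rw [hmahalA, hLVL1, Matrix.one_mulVec]
      simp [hQ, dotProduct]
    -- norm of the transported point
    have hnormA : ∀ y : Fin p → ℝ,
        ‖e.symm (μ0' + L.mulVec y) - μ0‖ ^ 2 = ∑ k, (L.mulVec y) k * (L.mulVec y) k := by
      intro y
      rw [EuclideanSpace.norm_eq, Real.sq_sqrt (by positivity)]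
      refine Finset.sum_congr rfl fun k _ => ?_
      have hc : (e.symm (μ0' + L.mulVec y) - μ0) k = L.mulVec y k := hAcoord y k
      rw [hc, Real.norm_eq_abs, sq_abs, sq]
    -- measurability of things in Euclidean space
    have hcoordE : ∀ k : Fin p, Measurable fun x : EuclideanSpace ℝ (Fin p) => x k := by
      intro k
      exact (measurable_pi_apply k).comp e.measurable
    have hmahalmeas : ∀ V : Matrix (Fin p) (Fin p) ℝ,
        Measurable fun x : EuclideanSpace ℝ (Fin p) => mahal x μ0 V := by
      intro V
      unfold mahal
      refine Finset.measurable_sum _ fun k _ => Finset.measurable_sum _ fun l _ => ?_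
      exact (((hcoordE k).sub measurable_const).mul_const _).mul
        ((hcoordE l).sub measurable_const)
    have hfmeas : Measurable f := by
      have hfe : f = fun x => (Real.sqrt V0.det)⁻¹ * ψ (mahal x μ0 V0) := funext hf
      rw [hfe]
      exact measurable_const.mul (hψmeas.comp (hmahalmeas V0))
    -- the master change of variables
    have master : ∀ F : EuclideanSpace ℝ (Fin p) → ℝ, Measurable F →
        ∫ x, F x = L.det * ∫ y, F (e.symm (μ0' + L.mulVec y)) := by
      intro F hF
      have h1 : ∫ x, F x = ∫ z : Fin p → ℝ, F (e.symm z) :=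
        (mpS.integral_comp' F).symm
      have hFm : AEStronglyMeasurable (fun z : Fin p → ℝ => F (e.symm z)) volume :=
        ((hF.comp e.symm.measurable)).aestronglyMeasurable
      rw [h1, integral_affine L hdet0 μ0' _ hFm, abs_of_pos hdetLpos]
    have masterInt : ∀ F : EuclideanSpace ℝ (Fin p) → ℝ, Measurable F →
        Integrable F volume →
        Integrable (fun y => F (e.symm (μ0' + L.mulVec y))) volume := by
      intro F hF hFi
      have h1 : Integrable (fun z : Fin p → ℝ => F (e.symm z)) volume :=
        (mpS.integrable_comp_emb e.symm.measurableEmbedding).mpr hFi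
      exact integrable_affine L hdet0 μ0' _
        ((hF.comp e.symm.measurable)).aestronglyMeasurable h1
    -- the radial weight
    set D : ℝ := Real.sqrt V0.det with hD
    have hDpos : 0 < D := Real.sqrt_pos.mpr hdetV0
    set G : ℝ → ℝ := fun t => w (a⁻¹ * t) * ψ t with hG
    have hGQmeas : Measurable fun y : Fin p → ℝ => G (Q y) :=
      (hwmeas.comp (hQmeas.const_mul a⁻¹)).mul (hψmeas.comp hQmeas)
    have hGnn : ∀ y : Fin p → ℝ, 0 ≤ G (Q y) := fun y =>
      mul_nonneg (hw0 _ (mul_nonneg (inv_nonneg.mpr ha.le) (hQnn y)))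
        (hψpos _ (hQnn y)).le
    have hLv_meas : ∀ k : Fin p, Measurable fun y : Fin p → ℝ => L.mulVec y k := by
      intro k
      have h1 : (fun y : Fin p → ℝ => L.mulVec y k) = fun y => ∑ m, L k m * y m := by
        funext y; simp [Matrix.mulVec, dotProduct]
      rw [h1]
      exact Finset.measurable_sum _ fun m _ => (measurable_pi_apply m).const_mul _
    set R : (Fin p → ℝ) → ℝ := fun y => ∑ k, L.mulVec y k * L.mulVec y k with hR
    have hRnn : ∀ y, 0 ≤ R y := fun y => Finset.sum_nonneg fun k _ => mul_self_nonneg _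
    -- transported integrability hypothesis
    have hintmeas : Measurable
        (fun x : EuclideanSpace ℝ (Fin p) =>
          w (mahal x μ0 (a • V0)) * (1 + ‖x - μ0‖ ^ 2) * f x) := by
      refine ((hwmeas.comp (hmahalmeas _)).mul ?_).mul hfmeas
      exact measurable_const.add
        (((continuous_id.sub continuous_const).norm.measurable).pow_const 2)
    have hint' := masterInt _ hintmeas hint
    have hint2 : Integrable
        (fun y : Fin p → ℝ => w (a⁻¹ * Q y) * (1 + R y) * (D⁻¹ * ψ (Q y))) volume := by
      have hfun : (fun y : Fin p → ℝ => w (a⁻¹ * Q y) * (1 + R y) * (D⁻¹ * ψ (Q y)))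
          = fun y => w (mahal (e.symm (μ0' + L.mulVec y)) μ0 (a • V0))
              * (1 + ‖e.symm (μ0' + L.mulVec y) - μ0‖ ^ 2)
              * f (e.symm (μ0' + L.mulVec y)) := by
        funext y
        rw [hmahalA1 y, hnormA y, hf, hmahalA0 y]
      rw [hfun]
      exact hint'
    -- Cauchy-Schwarz: Q ≤ K₀ * R
    set K₀ : ℝ := ∑ k, ∑ m, (L⁻¹ k m) ^ 2 with hK₀def
    have hK₀ : 0 ≤ K₀ :=
      Finset.sum_nonneg fun k _ => Finset.sum_nonneg fun m _ => sq_nonneg _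
    have hyinv : ∀ (y : Fin p → ℝ) (k : Fin p),
        y k = ∑ m, L⁻¹ k m * L.mulVec y m := by
      intro y k
      have h1 : L⁻¹.mulVec (L.mulVec y) = y := by
        rw [Matrix.mulVec_mulVec, Matrix.nonsing_inv_mul _ hu, Matrix.one_mulVec]
      conv_lhs => rw [← h1]
      simp [Matrix.mulVec, dotProduct]
    have hQR : ∀ y, Q y ≤ K₀ * R y := by
      intro y
      have h1 : ∀ k : Fin p, y k * y k ≤ (∑ m, (L⁻¹ k m) ^ 2) * R y := by
        intro k
        have hcs := Finset.sum_mul_sq_le_sq_mul_sq Finset.univ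
          (fun m => L⁻¹ k m) (fun m => L.mulVec y m)
        have hRsq : R y = ∑ m, (L.mulVec y m) ^ 2 :=
          Finset.sum_congr rfl fun m _ => (sq (L.mulVec y m)).symm
        calc y k * y k = (∑ m, L⁻¹ k m * L.mulVec y m) ^ 2 := by
              rw [← hyinv y k, sq]
          _ ≤ (∑ m, (L⁻¹ k m) ^ 2) * ∑ m, (L.mulVec y m) ^ 2 := hcs
          _ = (∑ m, (L⁻¹ k m) ^ 2) * R y := by rw [← hRsq]
      calc Q y = ∑ k, y k * y k := rfl
        _ ≤ ∑ k, (∑ m, (L⁻¹ k m) ^ 2) * R y := Finset.sum_le_sum fun k _ => h1 k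
        _ = K₀ * R y := by rw [← Finset.sum_mul]
    -- dominating integrability
    have hdom : Integrable (fun y : Fin p → ℝ => G (Q y) * (1 + Q y)) volume := by
      refine Integrable.mono' (hint2.const_mul (D * (1 + K₀)))
        ((hGQmeas.mul (measurable_const.add hQmeas)).aestronglyMeasurable) ?_
      filter_upwards with y
      have hnn : 0 ≤ G (Q y) * (1 + Q y) :=
        mul_nonneg (hGnn y) (by linarith [hQnn y])
      rw [Real.norm_eq_abs, abs_of_nonneg hnn]
      have hle : 1 + Q y ≤ (1 + K₀) * (1 + R y) := by
        nlinarith [hQR y, hRnn y, hK₀]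
      have hwnn : 0 ≤ w (a⁻¹ * Q y) :=
        hw0 _ (mul_nonneg (inv_nonneg.mpr ha.le) (hQnn y))
      have hψnn : 0 ≤ ψ (Q y) := (hψpos _ (hQnn y)).le
      have hDD : D * D⁻¹ = 1 := mul_inv_cancel₀ hDpos.ne'
      calc G (Q y) * (1 + Q y) ≤ G (Q y) * ((1 + K₀) * (1 + R y)) :=
            mul_le_mul_of_nonneg_left hle (hGnn y)
        _ = D * (1 + K₀) * (w (a⁻¹ * Q y) * (1 + R y) * (D⁻¹ * ψ (Q y))) := by
            simp only [hG]
            field_simp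
    have hIkl : ∀ k l : Fin p,
        Integrable (fun y : Fin p → ℝ => G (Q y) * (y k * y l)) volume := by
      intro k l
      refine hdom.mono'
        ((hGQmeas.mul ((measurable_pi_apply k).mul (measurable_pi_apply l))).aestronglyMeasurable) ?_
      filter_upwards with y
      have h1 : y k * y k ≤ Q y :=
        Finset.single_le_sum (f := fun m => y m * y m)
          (fun m _ => mul_self_nonneg _) (Finset.mem_univ k)
      have h2 : y l * y l ≤ Q y :=
        Finset.single_le_sum (f := fun m => y m * y m)
          (fun m _ => mul_self_nonneg _) (Finset.mem_univ l)
      have habs : |y k * y l| ≤ Q y := by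
        rw [abs_mul]
        nlinarith [abs_nonneg (y k), abs_nonneg (y l), abs_mul_abs_self (y k),
          abs_mul_abs_self (y l), sq_nonneg (|y k| - |y l|)]
      rw [Real.norm_eq_abs, abs_mul, abs_of_nonneg (hGnn y)]
      have : |y k * y l| ≤ 1 + Q y := le_trans habs (by linarith)
      exact mul_le_mul_of_nonneg_left this (hGnn y)
    -- moment values
    set k0 : Fin p := ⟨0, hp⟩ with hk0
    set c : ℝ := ∫ y : Fin p → ℝ, G (Q y) * (y k0 * y k0) with hc
    have hmom : ∀ k l : Fin p,
        (∫ y : Fin p → ℝ, G (Q y) * (y k * y l)) = if k = l then c else 0 := by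
      intro k l
      by_cases hkl : k = l
      · subst hkl
        rw [if_pos rfl, hc]
        exact integral_diag_swap G k k0
      · rw [if_neg hkl]
        exact integral_offdiag G hkl
    -- evaluate both integrals
    have hLjk : ∀ k : Fin p, L j k = L k j := by
      intro k
      nth_rewrite 1 [← hLsym]
      exact Matrix.transpose_apply _ _ _
    have hI2 : (∫ x, w (mahal x μ0 (a • V0)) * ((x i - μ0 i) * (x j - μ0 j)) * f x)
        = c * V0 i j := by
      have hmeas2 : Measurable (fun x : EuclideanSpace ℝ (Fin p) =>
          w (mahal x μ0 (a • V0)) * ((x i - μ0 i) * (x j - μ0 j)) * f x) :=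
        ((hwmeas.comp (hmahalmeas _)).mul
          (((hcoordE i).sub measurable_const).mul ((hcoordE j).sub measurable_const))).mul hfmeas
      rw [master _ hmeas2]
      have hfun : (fun y : Fin p → ℝ =>
          w (mahal (e.symm (μ0' + L.mulVec y)) μ0 (a • V0))
            * ((e.symm (μ0' + L.mulVec y) i - μ0 i) * (e.symm (μ0' + L.mulVec y) j - μ0 j))
            * f (e.symm (μ0' + L.mulVec y)))
          = fun y => D⁻¹ * (G (Q y) * (L.mulVec y i * L.mulVec y j)) := by
        funext y
        rw [hmahalA1 y, hAcoord y i, hAcoord y j, hf, hmahalA0 y]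
        simp only [hG]
        ring
      rw [hfun, integral_const_mul, hdL, ← mul_assoc, mul_inv_cancel₀ hDpos.ne', one_mul]
      have hexp : ∀ y : Fin p → ℝ, G (Q y) * (L.mulVec y i * L.mulVec y j)
          = ∑ k, ∑ l, (L i k * L j l) * (G (Q y) * (y k * y l)) := by
        intro y
        have hvi : L.mulVec y i = ∑ k, L i k * y k := by simp [Matrix.mulVec, dotProduct]
        have hvj : L.mulVec y j = ∑ l, L j l * y l := by simp [Matrix.mulVec, dotProduct]
        rw [hvi, hvj, Finset.sum_mul_sum, Finset.mul_sum]
        refine Finset.sum_congr rfl fun k _ => ?_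
        rw [Finset.mul_sum]
        refine Finset.sum_congr rfl fun l _ => ?_
        ring
      have hintsum : ∀ k : Fin p, Integrable
          (fun y : Fin p → ℝ => ∑ l, (L i k * L j l) * (G (Q y) * (y k * y l))) volume :=
        fun k => integrable_finset_sum _ fun l _ => (hIkl k l).const_mul _
      calc ∫ y : Fin p → ℝ, G (Q y) * (L.mulVec y i * L.mulVec y j)
          = ∫ y : Fin p → ℝ, ∑ k, ∑ l, (L i k * L j l) * (G (Q y) * (y k * y l)) :=
            integral_congr_ae (Filter.Eventually.of_forall fun y => hexp y)
        _ = ∑ k, ∑ l, (L i k * L j l) * ∫ y : Fin p → ℝ, G (Q y) * (y k * y l) := by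
            rw [integral_finset_sum _ fun k _ => hintsum k]
            refine Finset.sum_congr rfl fun k _ => ?_
            rw [integral_finset_sum _ fun l _ => (hIkl k l).const_mul _]
            exact Finset.sum_congr rfl fun l _ => integral_const_mul _ _
        _ = ∑ k, L i k * L j k * c := by
            refine Finset.sum_congr rfl fun k _ => ?_
            rw [Finset.sum_eq_single k]
            · rw [hmom k k, if_pos rfl]
            · intro l _ hlk
              rw [hmom k l, if_neg (Ne.symm hlk), mul_zero]
            · intro hk; exact absurd (Finset.mem_univ k) hk
        _ = c * V0 i j := by
            rw [← hLL, Matrix.mul_apply, Finset.mul_sum]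
            refine Finset.sum_congr rfl fun k _ => ?_
            rw [hLjk k]
            ring
    have hI3 : (∫ x, w (mahal x μ0 (a • V0)) * mahal x μ0 (a • V0) * f x)
        = a⁻¹ * ((p : ℝ) * c) := by
      have hmeas3 : Measurable (fun x : EuclideanSpace ℝ (Fin p) =>
          w (mahal x μ0 (a • V0)) * mahal x μ0 (a • V0) * f x) :=
        ((hwmeas.comp (hmahalmeas _)).mul (hmahalmeas _)).mul hfmeas
      rw [master _ hmeas3]
      have hfun : (fun y : Fin p → ℝ =>
          w (mahal (e.symm (μ0' + L.mulVec y)) μ0 (a • V0))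
            * mahal (e.symm (μ0' + L.mulVec y)) μ0 (a • V0)
            * f (e.symm (μ0' + L.mulVec y)))
          = fun y => (D⁻¹ * a⁻¹) * ∑ k, G (Q y) * (y k * y k) := by
        funext y
        rw [hmahalA1 y, hf, hmahalA0 y]
        have hQs : Q y = ∑ k, y k * y k := rfl
        rw [← Finset.mul_sum, ← hQs]
        simp only [hG]
        ring
      rw [hfun, integral_const_mul, hdL,
        integral_finset_sum _ fun k _ => hIkl k k]
      have hsum : ∀ k : Fin p, (∫ y : Fin p → ℝ, G (Q y) * (y k * y k)) = c := by
        intro k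
        rw [hmom k k, if_pos rfl]
      rw [Finset.sum_congr rfl fun k _ => hsum k, Finset.sum_const, Finset.card_univ,
        Fintype.card_fin, nsmul_eq_mul]
      field_simp
    rw [hI2, hI3]
    have hs : (a • V0) i j = a * V0 i j := rfl
    rw [hs]
    field_simp
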